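/- Let A and B be finite types with A nonempty, let b₀ ∈ B, and let W be a unitary on EuclideanSpace ℂ (A × B). Suppose that ‖(⟨e_a| ⊗ I)(W(e_a ⊗ e_{b₀}))‖ = 1 for every a ∈ A, and that ‖(⟨(e_a + e_{a'})/√2| ⊗ I)(W(((e_a + e_{a'})/√2) ⊗ e_{b₀}))‖ = 1 for all a, a' ∈ A with a ≠ a'. Then there exists a single unit vector χ ∈ EuclideanSpace ℂ B such that W(ψ ⊗ e_{b₀}) = ψ ⊗ χ for every ψ ∈ EuclideanSpace ℂ A. (The exact, zero-error case of the standard-basis check plus coherency check in the paper's QCMA protocol for UMCSP: passing both tests perfectly certifies that the tested operation acts as the identity on the data register, up to a fixed pure ancilla state.) -/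

import Mathlib

/-- Pure tensor: `(u ⊗ w)(a, b) = u a * w b`. -/
def tens {A B : Type*} (u : EuclideanSpace ℂ A) (w : EuclideanSpace ℂ B) :
    EuclideanSpace ℂ (A × B) :=
  WithLp.toLp 2 (fun p => u p.1 * w p.2)

/-- Partial inner product: `(⟨u|⊗I)v (b) = Σ_a conj (u a) * v (a, b)`. -/
noncomputable def pinner {A B : Type*} [Fintype A] (u : EuclideanSpace ℂ A)
    (v : EuclideanSpace ℂ (A × B)) : EuclideanSpace ℂ B :=
  WithLp.toLp 2 (fun b => ∑ a, (starRingEnd ℂ) (u a) * v (a, b))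

open scoped InnerProductSpace
open Finset

set_option linter.unusedSectionVars false

section Aux

variable {A B : Type*} [Fintype A] [Fintype B] [DecidableEq A] [DecidableEq B]

lemma pinner_single_apply (a : A) (v : EuclideanSpace ℂ (A × B)) (b : B) :
    pinner (EuclideanSpace.single a (1:ℂ)) v b = v (a, b) := by
  simp [pinner, EuclideanSpace.single_apply, apply_ite (starRingEnd ℂ), ite_mul]

lemma pinner_add_right (u : EuclideanSpace ℂ A) (v v' : EuclideanSpace ℂ (A × B)) :
    pinner u (v + v') = pinner u v + pinner u v' := by
  ext b
  simp [pinner, mul_add, Finset.sum_add_distrib]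

lemma pinner_add_left (u u' : EuclideanSpace ℂ A) (v : EuclideanSpace ℂ (A × B)) :
    pinner (u + u') v = pinner u v + pinner u' v := by
  ext b
  simp [pinner, add_mul, Finset.sum_add_distrib]

lemma pinner_smul_right (c : ℂ) (u : EuclideanSpace ℂ A) (v : EuclideanSpace ℂ (A × B)) :
    pinner u (c • v) = c • pinner u v := by
  ext b
  simp [pinner, Finset.mul_sum, mul_left_comm]

lemma pinner_smul_left (c : ℂ) (u : EuclideanSpace ℂ A) (v : EuclideanSpace ℂ (A × B)) :
    pinner (c • u) v = (starRingEnd ℂ) c • pinner u v := by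
  ext b
  simp [pinner, Finset.mul_sum, mul_assoc]

lemma tens_single_single (a : A) (b : B) :
    tens (EuclideanSpace.single a (1:ℂ)) (EuclideanSpace.single b (1:ℂ))
      = EuclideanSpace.single (a, b) 1 := by
  ext p
  obtain ⟨x, y⟩ := p
  by_cases h1 : x = a <;> by_cases h2 : y = b <;>
    simp [tens, EuclideanSpace.single_apply, Prod.ext_iff, h1, h2]

lemma tens_sum (ψ : EuclideanSpace ℂ A) (w : EuclideanSpace ℂ B) :
    tens ψ w = ∑ a, ψ a • tens (EuclideanSpace.single a 1) w := by
  ext p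
  rw [WithLp.ofLp_sum, Finset.sum_apply]
  simp [tens, EuclideanSpace.single_apply, mul_ite, ite_mul, mul_assoc]

lemma pinner_single_tens (a a' : A) (χ : EuclideanSpace ℂ B) :
    pinner (EuclideanSpace.single a (1:ℂ)) (tens (EuclideanSpace.single a' 1) χ)
      = if a = a' then χ else 0 := by
  ext b
  rw [pinner_single_apply]
  by_cases h : a = a' <;> simp [tens, EuclideanSpace.single_apply, h]

lemma norm_sq_sum {X : Type*} [Fintype X] (x : EuclideanSpace ℂ X) (h : ‖x‖ = 1) :
    ∑ i, ‖x i‖ ^ 2 = 1 := by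
  have h0 : (0:ℝ) ≤ ∑ i, ‖x i‖ ^ 2 := Finset.sum_nonneg fun i _ => sq_nonneg _
  have h1 : Real.sqrt (∑ i, ‖x i‖ ^ 2) = 1 := by
    rw [← EuclideanSpace.norm_eq]; exact h
  nlinarith [Real.sq_sqrt h0]

lemma real_smul_eq_complex {X : Type*} (r : ℝ) (x : EuclideanSpace ℂ X) :
    r • x = ((r:ℂ)) • x := (algebraMap_smul ℂ r x).symm

end Aux

/-- The exact, zero-error case of the standard-basis check plus coherency
check: passing both tests perfectly certifies the tested unitary acts as the
identity on the data register, up to a fixed pure ancilla state `χ`. -/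
theorem exact_coherency_certifies_identity {A B : Type*} [Fintype A] [Fintype B]
    [DecidableEq A] [DecidableEq B] [Nonempty A] (b₀ : B)
    (W : EuclideanSpace ℂ (A × B) ≃ₗᵢ[ℂ] EuclideanSpace ℂ (A × B))
    (hbasis : ∀ a : A,
      ‖pinner (EuclideanSpace.single a 1)
        (W (tens (EuclideanSpace.single a 1) (EuclideanSpace.single b₀ 1)))‖ = 1)
    (hcoh : ∀ a a' : A, a ≠ a' →
      ‖pinner ((Real.sqrt 2)⁻¹ •
            (EuclideanSpace.single a 1 + EuclideanSpace.single a' 1))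
        (W (tens ((Real.sqrt 2)⁻¹ •
            (EuclideanSpace.single a 1 + EuclideanSpace.single a' 1))
          (EuclideanSpace.single b₀ 1)))‖ = 1) :
    ∃ χ : EuclideanSpace ℂ B, ‖χ‖ = 1 ∧
      ∀ ψ : EuclideanSpace ℂ A,
        W (tens ψ (EuclideanSpace.single b₀ 1)) = tens ψ χ := by
  classical
  -- Step 1: each basis state maps to a pure tensor.
  have key : ∀ a : A, ∃ χ : EuclideanSpace ℂ B, ‖χ‖ = 1 ∧
      W (tens (EuclideanSpace.single a 1) (EuclideanSpace.single b₀ 1))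
        = tens (EuclideanSpace.single a 1) χ := by
    intro a
    set v : EuclideanSpace ℂ (A × B) :=
      W (tens (EuclideanSpace.single a 1) (EuclideanSpace.single b₀ 1)) with hv
    refine ⟨pinner (EuclideanSpace.single a 1) v, hbasis a, ?_⟩
    have hvnorm : ‖v‖ = 1 := by
      rw [hv, W.norm_map, tens_single_single]
      simp
    have hsum : ∑ p : A × B, ‖v p‖ ^ 2 = 1 := norm_sq_sum v hvnorm
    have hχ : ∑ b, ‖v (a, b)‖ ^ 2 = 1 := by
      have h := norm_sq_sum _ (hbasis a)
      simpa [pinner_single_apply] using h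
    have hzero : ∀ a' : A, a' ≠ a → ∀ b, v (a', b) = 0 := by
      have hsum' : ∑ a', ∑ b, ‖v (a', b)‖ ^ 2 = 1 := by
        rw [Fintype.sum_prod_type] at hsum; exact hsum
      have hsplit := Finset.add_sum_erase Finset.univ
        (fun a' => ∑ b, ‖v (a', b)‖ ^ 2) (Finset.mem_univ a)
      have hrest : ∑ a' ∈ Finset.univ.erase a, ∑ b, ‖v (a', b)‖ ^ 2 = 0 := by
        have := hsplit
        simp only at this
        linarith [hχ, hsum', this]
      intro a' ha' b
      have h1 : ∑ b, ‖v (a', b)‖ ^ 2 = 0 :=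
        (Finset.sum_eq_zero_iff_of_nonneg
          (fun _ _ => Finset.sum_nonneg fun _ _ => sq_nonneg _)).mp hrest a'
          (Finset.mem_erase.mpr ⟨ha', Finset.mem_univ a'⟩)
      have h2 : ‖v (a', b)‖ ^ 2 = 0 :=
        (Finset.sum_eq_zero_iff_of_nonneg (fun _ _ => sq_nonneg _)).mp h1 b
          (Finset.mem_univ b)
      have h3 : ‖v (a', b)‖ = 0 := by
        nlinarith [norm_nonneg (v (a', b))]
      simpa using h3
    ext p
    obtain ⟨a', b⟩ := p
    by_cases h : a' = a
    · subst h
      simp [tens, EuclideanSpace.single_apply, pinner_single_apply]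
    · rw [hzero a' h b]
      simp [tens, EuclideanSpace.single_apply, h]
  choose χf hχnorm hχeq using key
  -- Step 2: all ancilla states coincide.
  have hpair : ∀ a a' : A, a ≠ a' → χf a = χf a' := by
    intro a a' hne
    set r : ℝ := (Real.sqrt 2)⁻¹ with hr
    have hW : W (tens (r • (EuclideanSpace.single a 1 + EuclideanSpace.single a' 1))
          (EuclideanSpace.single b₀ 1))
        = ((r:ℂ)) • (tens (EuclideanSpace.single a 1) (χf a)
            + tens (EuclideanSpace.single a' 1) (χf a')) := by
      have h1 : tens (r • (EuclideanSpace.single a 1 + EuclideanSpace.single a' 1))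
            (EuclideanSpace.single b₀ 1)
          = ((r:ℂ)) • (tens (EuclideanSpace.single a 1) (EuclideanSpace.single b₀ 1)
              + tens (EuclideanSpace.single a' 1) (EuclideanSpace.single b₀ 1)) := by
        rw [real_smul_eq_complex]
        ext p
        by_cases hb : p.2 = b₀ <;>
          simp [tens, EuclideanSpace.single_apply, hb, mul_add, add_mul, smul_mul_assoc]
      rw [h1, map_smul, map_add, hχeq a, hχeq a']
    have hp : pinner (r • (EuclideanSpace.single a 1 + EuclideanSpace.single a' 1))
          (W (tens (r • (EuclideanSpace.single a 1 + EuclideanSpace.single a' 1))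
            (EuclideanSpace.single b₀ 1)))
        = ((1:ℂ)/2) • (χf a + χf a') := by
      rw [hW, real_smul_eq_complex, pinner_smul_left, pinner_smul_right,
        pinner_add_left, pinner_add_right, pinner_add_right,
        pinner_single_tens, pinner_single_tens, pinner_single_tens, pinner_single_tens]
      simp only [if_pos rfl, if_neg hne, if_neg hne.symm, add_zero, zero_add,
        Complex.conj_ofReal, smul_smul, ite_true, if_true]
      have hrr : ((r:ℂ)) * ((r:ℂ)) = (1:ℂ)/2 := by
        have : r * r = 1/2 := by
          rw [hr, ← mul_inv]
          rw [Real.mul_self_sqrt (by norm_num : (0:ℝ) ≤ 2)]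
          norm_num
        calc ((r:ℂ)) * ((r:ℂ)) = ((r * r : ℝ) : ℂ) := by push_cast; ring
          _ = (1:ℂ)/2 := by rw [this]; norm_num
      rw [hrr]
    have hnrm : ‖((1:ℂ)/2) • (χf a + χf a')‖ = 1 := by
      rw [← hp]; exact hcoh a a' hne
    have hadd : ‖χf a + χf a'‖ = 2 := by
      rw [norm_smul] at hnrm
      simp at hnrm
      linarith
    have hre : RCLike.re ⟪χf a, χf a'⟫_ℂ = 1 := by
      have h4 := norm_add_sq (𝕜 := ℂ) (χf a) (χf a')
      rw [hadd, hχnorm a, hχnorm a'] at h4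
      linarith
    have hsub : ‖χf a - χf a'‖ ^ 2 = 0 := by
      have h5 := norm_sub_sq (𝕜 := ℂ) (χf a) (χf a')
      rw [hχnorm a, hχnorm a', hre] at h5
      linarith
    have : χf a - χf a' = 0 := by
      have := pow_eq_zero_iff (n := 2) (by norm_num) |>.mp hsub
      exact norm_eq_zero.mp this
    exact sub_eq_zero.mp this
  obtain ⟨a₀⟩ := ‹Nonempty A›
  have hEq : ∀ a, χf a = χf a₀ := by
    intro a
    by_cases h : a = a₀
    · rw [h]
    · exact hpair a a₀ h
  refine ⟨χf a₀, hχnorm a₀, ?_⟩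
  intro ψ
  rw [tens_sum ψ (EuclideanSpace.single b₀ 1), map_sum, tens_sum ψ (χf a₀)]
  refine Finset.sum_congr rfl fun a _ => ?_
  rw [map_smul, hχeq a, hEq a]
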